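/- For integers s ≥ d ≥ 1, the number of distinct values of a + bd over nonnegative integers a, b with a + b ≤ s equals ds − d(d−3)/2, and these values are exactly the exponents appearing in polynomials of the form p(t, t^d) with deg p ≤ s. -/

import Mathlib

open Polynomial

namespace Stmt18Aux

open Finset

/-- The triangle `{(a,b) : a + b ≤ n}` as a finset. -/
def T (n : ℕ) : Finset (ℕ × ℕ) := (Finset.range (n+1)).biUnion (fun k => Finset.HasAntidiagonal.antidiagonal k)

lemma mem_T {n : ℕ} {p : ℕ × ℕ} : p ∈ T n ↔ p.1 + p.2 ≤ n := by
  simp only [T, Finset.mem_biUnion, Finset.mem_range, Finset.HasAntidiagonal.mem_antidiagonal]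
  constructor
  · rintro ⟨k, hk, rfl⟩; omega
  · intro h; exact ⟨p.1 + p.2, by omega, rfl⟩

lemma card_T (n : ℕ) : (T n).card = (n+2).choose 2 := by
  rw [T, Finset.card_biUnion]
  · obtain ⟨k, hk⟩ := Nat.even_mul_succ_self n
    have h2 : (∑ i ∈ range (n+1), i) * 2 = (n+1) * n := by
      simpa using Finset.sum_range_id_mul_two (n+1)
    have hS : (∑ i ∈ range (n+1), i) = k := by
      have : (∑ i ∈ range (n+1), i) * 2 = k + k := by rw [h2, mul_comm, hk]
      omega
    have h3 : (n+2)*(n+1) = 2*k + 2*(n+1) := by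
      have : (n+2)*(n+1) = n*(n+1) + 2*(n+1) := by ring
      omega
    have h4 : (n+2)*(n+2-1) = 2*k + 2*(n+1) := by simpa using h3
    simp only [Nat.card_antidiagonal, Nat.choose_two_right]
    rw [Finset.sum_add_distrib, hS]
    simp only [Finset.sum_const, smul_eq_mul, mul_one, Finset.card_range]
    omega
  · intro x _ y _ hxy
    simp only [Finset.disjoint_left, Finset.HasAntidiagonal.mem_antidiagonal]
    intro a hab hab2
    omega

end Stmt18Aux

open Stmt18Aux Finset

/-- For `s ≥ d ≥ 1`, the set `E = {a + b·d : a + b ≤ s}` has exactly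
`binom(s+2,2) − binom(s−d+2,2)` (`= ds − d(d−3)/2`) elements, and its elements are
exactly the exponents occurring in polynomials of the form `p(t, t^d)` with
`deg p ≤ s`. -/
theorem stmt18 (d s : ℕ) (hd : 1 ≤ d) (hs : d ≤ s) :
    {e : ℕ | ∃ a b : ℕ, a + b ≤ s ∧ e = a + b * d}.ncard
        = Nat.choose (s + 2) 2 - Nat.choose (s - d + 2) 2 ∧
    ∀ e : ℕ, (∃ a b : ℕ, a + b ≤ s ∧ e = a + b * d) ↔
      ∃ p : MvPolynomial (Fin 2) ℝ, p.totalDegree ≤ s ∧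
        e ∈ (MvPolynomial.aeval ![(X : Polynomial ℝ), X ^ d] p).support := by
  constructor
  · -- cardinality
    classical
    set f : ℕ × ℕ → ℕ := fun p => p.1 + p.2 * d with hf
    -- the set is the coercion of a finset image
    have hset : {e : ℕ | ∃ a b : ℕ, a + b ≤ s ∧ e = a + b * d}
        = ↑((T s).image f) := by
      ext e
      simp only [Set.mem_setOf_eq, Finset.coe_image, Set.mem_image, Finset.mem_coe, mem_T, hf]
      constructor
      · rintro ⟨a, b, hab, rfl⟩; exact ⟨(a, b), hab, rfl⟩
      · rintro ⟨⟨a, b⟩, hab, rfl⟩; exact ⟨a, b, hab, rfl⟩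
    rw [hset, Set.ncard_coe_finset]
    -- the non-canonical pairs
    set N : Finset (ℕ × ℕ) := (T (s - d)).image (fun p => (p.1, p.2 + 1)) with hN
    have hmemN : ∀ p : ℕ × ℕ, p ∈ N ↔ 1 ≤ p.2 ∧ p.1 + p.2 + d ≤ s + 1 := by
      rintro ⟨a, b⟩
      simp only [hN, Finset.mem_image, mem_T, Prod.mk.injEq, Prod.exists]
      constructor
      · rintro ⟨x, y, hxy, rfl, rfl⟩; omega
      · rintro ⟨hb, hab⟩; exact ⟨a, b - 1, by omega, rfl, by omega⟩
    have hNsub : N ⊆ T s := by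
      intro p hp
      rw [hmemN] at hp
      rw [mem_T]
      omega
    have hcardN : N.card = (s - d + 2).choose 2 := by
      rw [hN, Finset.card_image_of_injective _ (by intro a b h; simpa [Prod.ext_iff] using h),
        card_T]
    -- canonical pairs
    set K : Finset (ℕ × ℕ) := T s \ N with hK
    have hcardK : K.card = (s + 2).choose 2 - (s - d + 2).choose 2 := by
      rw [hK, Finset.card_sdiff_of_subset hNsub, card_T, hcardN]
    -- same image
    have himage : (T s).image f = K.image f := by
      apply Finset.Subset.antisymm
      · intro e he
        rw [Finset.mem_image] at he
        obtain ⟨p, hp, rfl⟩ := he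
        -- descend on the second coordinate
        clear hset
        obtain ⟨a, b⟩ := p
        rw [mem_T] at hp
        induction b using Nat.strong_induction_on generalizing a with
        | _ b ih =>
          by_cases hcan : (a, b) ∈ N
          · rw [hmemN] at hcan
            obtain ⟨hb, hab⟩ := hcan
            have := ih (b - 1) (by omega) (a + d) (by omega)
            rw [Finset.mem_image] at this ⊢
            obtain ⟨q, hq, hqe⟩ := this
            refine ⟨q, hq, ?_⟩
            rw [hqe, hf]
            simp only
            have : (b - 1) * d + d = b * d := by
              cases b with
              | zero => omega
              | succ b => simp [Nat.succ_mul]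
            omega
          · exact Finset.mem_image_of_mem f (by rw [hK, Finset.mem_sdiff, mem_T]; exact ⟨hp, hcan⟩)
      · exact Finset.image_subset_image (by rw [hK]; exact Finset.sdiff_subset)
    rw [himage, Finset.card_image_of_injOn, hcardK]
    -- injectivity on K
    rintro ⟨a, b⟩ hab ⟨a', b'⟩ hab' heq
    simp only [hK, Finset.coe_sdiff, Set.mem_diff, Finset.mem_coe, mem_T] at hab hab'
    obtain ⟨habT, habN⟩ := hab
    obtain ⟨habT', habN'⟩ := hab'
    rw [hmemN] at habN habN'
    simp only [hf] at heq
    -- show b = b'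
    rcases lt_trichotomy b b' with h | h | h
    · exfalso
      apply habN'
      have hk : 1 ≤ b' - b := by omega
      have ha : a = a' + (b' - b) * d := by
        have : b * d + (b' - b) * d = b' * d := by
          rw [← Nat.add_mul]; congr 1; omega
        omega
      have hkd : (b' - b) + d ≤ (b' - b) * d + 1 := by
        have := Nat.mul_le_mul hk (le_refl d)
        nlinarith [Nat.one_le_iff_ne_zero.mp hd, Nat.sub_le b' b]
      constructor
      · omega
      · -- a' + b' + d ≤ s + 1
        have : a' + (b' - b) * d + b ≤ s := by omega
        omega
    · subst h
      have : a = a' := by omega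
      simp [this]
    · exfalso
      apply habN
      have hk : 1 ≤ b - b' := by omega
      have ha : a' = a + (b - b') * d := by
        have : b' * d + (b - b') * d = b * d := by
          rw [← Nat.add_mul]; congr 1; omega
        omega
      have hkd : (b - b') + d ≤ (b - b') * d + 1 := by
        nlinarith [Nat.one_le_iff_ne_zero.mp hd]
      constructor
      · omega
      · have : a + (b - b') * d + b' ≤ s := by omega
        omega
  · -- exponent characterization
    intro e
    constructor
    · rintro ⟨a, b, hab, rfl⟩
      classical
      set m : Fin 2 →₀ ℕ := Finsupp.equivFunOnFinite.symm ![a, b] with hm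
      have hm0 : m 0 = a := rfl
      have hm1 : m 1 = b := rfl
      refine ⟨MvPolynomial.monomial m 1, ?_, ?_⟩
      · rw [MvPolynomial.totalDegree_monomial _ (one_ne_zero)]
        rw [Finsupp.sum_fintype _ _ (fun _ => rfl), Fin.sum_univ_two, hm0, hm1]
        exact hab
      · rw [MvPolynomial.aeval_monomial]
        rw [Finsupp.prod_fintype _ _ (fun i => pow_zero _), Fin.prod_univ_two, hm0, hm1]
        simp only [Matrix.cons_val_zero, Matrix.cons_val_one, Matrix.head_cons, map_one, one_mul]
        rw [← pow_mul, ← pow_add, support_X_pow (a + d * b)]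
        simp [mul_comm]
    · rintro ⟨p, hdeg, he⟩
      rw [MvPolynomial.aeval_def, MvPolynomial.eval₂_eq] at he
      rw [Polynomial.mem_support_iff] at he
      rw [Polynomial.finset_sum_coeff] at he
      obtain ⟨m, hm, hcoeff⟩ := Finset.exists_ne_zero_of_sum_ne_zero he
      have hprod : (∏ i ∈ m.support, (![(X : Polynomial ℝ), X ^ d] i) ^ m i)
          = X ^ (m 0 + m 1 * d) := by
        have : (∏ i ∈ m.support, (![(X : Polynomial ℝ), X ^ d] i) ^ m i)
            = m.prod (fun i k => (![(X : Polynomial ℝ), X ^ d] i) ^ k) := rfl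
        rw [this, Finsupp.prod_fintype _ _ (fun i => pow_zero _), Fin.prod_univ_two]
        simp only [Matrix.cons_val_zero, Matrix.cons_val_one, Matrix.head_cons]
        rw [← pow_mul, ← pow_add, mul_comm d (m 1)]
      rw [hprod] at hcoeff
      have : (algebraMap ℝ (Polynomial ℝ)) (MvPolynomial.coeff m p) = C (MvPolynomial.coeff m p) := rfl
      rw [this] at hcoeff
      have he' : e ∈ (C (MvPolynomial.coeff m p) * X ^ (m 0 + m 1 * d)).support :=
        Polynomial.mem_support_iff.mpr hcoeff
      have := support_C_mul_X_pow' (m 0 + m 1 * d) (MvPolynomial.coeff m p) he'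
      rw [Finset.mem_singleton] at this
      subst this
      refine ⟨m 0, m 1, ?_, rfl⟩
      have hle := MvPolynomial.le_totalDegree hm
      rw [Finsupp.sum_fintype _ _ (fun _ => rfl), Fin.sum_univ_two] at hle
      omega
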